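/- Let c ∈ ℂ and let C be a real number with C ≥ max(6, √|Re(c)|). Let x, y, z, t ∈ ℂ satisfy P(x,y,z,t) = 2·Re(c). If |z| ≤ C and |z + conj(y)·t − x·y| ≤ C, then min(|x|, |y|, |t|) ≤ C. -/

import Mathlib

/-- The expression `P(x,y,z,t)` from the trace relation. -/
noncomputable def Pfun (x y z t : ℂ) : ℝ :=
  ‖x‖ ^ 2 * ‖y‖ ^ 2 + ‖x‖ ^ 2 + ‖y‖ ^ 2 +
    ‖z‖ ^ 2 + ‖t‖ ^ 2 - 2 * (x * y * (starRingEnd ℂ) z).re -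
    2 * ((starRingEnd ℂ) x * y * t).re - 3

lemma Pfun_key (x y z t : ℂ) :
    Pfun x y z t = ‖x * y - z‖ ^ 2 + ‖y * t - x‖ ^ 2 -
      (‖y‖ ^ 2 - 1) * (‖t‖ ^ 2 - 1) - 2 := by
  simp only [Pfun, Complex.sq_norm, Complex.normSq_apply, Complex.sub_re, Complex.sub_im,
    Complex.mul_re, Complex.mul_im, Complex.conj_re, Complex.conj_im]
  ring

set_option maxHeartbeats 1000000 in
lemma aux_false (C A B V S1 S2 cre : ℝ) (hC6 : 6 ≤ C) (hcre : cre ≤ C ^ 2)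
    (hA : C < A) (hB : C < B) (hV : C < V) (hS1nn : 0 ≤ S1) (hS2nn : 0 ≤ S2)
    (h1 : B * V - C ≤ S1) (h1' : A * B - C ≤ S1) (h2 : B * V - A ≤ S2)
    (hkey : 2 * cre = S1 ^ 2 + S2 ^ 2 - (B ^ 2 - 1) * (V ^ 2 - 1) - 2) : False := by
  have hBV : C ^ 2 < B * V := by nlinarith
  have hBVC : 6 * C < B * V := by nlinarith
  have hBVpos : 0 < B * V := by nlinarith
  have hprod : (B ^ 2 - 1) * (V ^ 2 - 1) ≤ (B * V) ^ 2 := by nlinarith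
  have hS2sq : S2 ^ 2 ≤ 3 * C * (B * V) := by
    have hS1lb : (B * V - C) ^ 2 ≤ S1 ^ 2 := by nlinarith
    have hexp : (B * V - C) ^ 2 = (B * V) ^ 2 - 2 * (C * (B * V)) + C ^ 2 := by ring
    have hcc : C ^ 2 + 2 ≤ C * (B * V) := by nlinarith
    linarith
  have hS2ub : S2 ≤ (3 / 4) * (B * V) := by
    have hm : 6 * C * (B * V) < (B * V) * (B * V) := mul_lt_mul_of_pos_right hBVC hBVpos
    have he : (B * V) * (B * V) = (B * V) ^ 2 := by ring
    have h34 : S2 ^ 2 ≤ (1 / 2) * (B * V) ^ 2 := by linarith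
    by_contra hcon
    push_neg at hcon
    have h9 : ((3 / 4) * (B * V)) ^ 2 < S2 ^ 2 :=
      pow_lt_pow_left₀ hcon (by positivity) (by norm_num)
    have h9' : ((3 / 4) * (B * V)) ^ 2 = (9 / 16) * (B * V) ^ 2 := by ring
    have hw2pos : 0 < (B * V) ^ 2 := by positivity
    linarith
  have hAlb : B * V / 4 ≤ A := by linarith
  have hS1big : (4 / 3) * (B * V) ≤ S1 := by
    have hab : (3 / 2) * (B * V) ≤ A * B := by nlinarith
    have hCBV : C ≤ B * V / 6 := by linarith
    linarith
  have hfin : (16 / 9) * (B * V) ^ 2 ≤ S1 ^ 2 := by nlinarith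
  have hw2 : 36 * (B * V) ≤ (B * V) ^ 2 := by nlinarith
  have hS2sqnn : 0 ≤ S2 ^ 2 := sq_nonneg S2
  linarith

theorem distance_two_lemma (c : ℂ) (C : ℝ) (hC : max 6 (Real.sqrt |c.re|) ≤ C)
    (x y z t : ℂ) (hP : Pfun x y z t = 2 * c.re)
    (hz : ‖z‖ ≤ C)
    (hz' : ‖z + (starRingEnd ℂ) y * t - x * y‖ ≤ C) :
    min (‖x‖) (min (‖y‖) (‖t‖)) ≤ C := by
  by_contra h
  push_neg at h
  rw [lt_min_iff, lt_min_iff] at h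
  obtain ⟨hA, hB, hV⟩ := h
  set A := ‖x‖ with hAdef
  set B := ‖y‖ with hBdef
  set V := ‖t‖ with hVdef
  set S1 := ‖x * y - z‖ with hS1def
  set S2 := ‖y * t - x‖ with hS2def
  have hC6 : (6 : ℝ) ≤ C := le_trans (le_max_left _ _) hC
  have hCs : Real.sqrt |c.re| ≤ C := le_trans (le_max_right _ _) hC
  have hcre : c.re ≤ C ^ 2 := by
    have h1 : |c.re| = Real.sqrt |c.re| ^ 2 := (Real.sq_sqrt (abs_nonneg _)).symm
    have h2 : Real.sqrt |c.re| ^ 2 ≤ C ^ 2 := by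
      apply pow_le_pow_left₀ (Real.sqrt_nonneg _) hCs
    calc c.re ≤ |c.re| := le_abs_self _
    _ ≤ C ^ 2 := by rw [h1]; exact h2
  -- triangle inequalities
  have hS1nn : 0 ≤ S1 := norm_nonneg _
  have hS2nn : 0 ≤ S2 := norm_nonneg _
  have hanon : 0 ≤ A := norm_nonneg _
  have hconj : ‖(starRingEnd ℂ) y * t‖ = B * V := by
    rw [norm_mul, Complex.norm_conj]
  have h1 : B * V - C ≤ S1 := by
    have e : (starRingEnd ℂ) y * t = (x * y - z) + (z + (starRingEnd ℂ) y * t - x * y) := by ring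
    have := norm_add_le (x * y - z) (z + (starRingEnd ℂ) y * t - x * y)
    rw [← e, hconj] at this
    linarith
  have h1' : A * B - C ≤ S1 := by
    have e : x * y = (x * y - z) + z := by ring
    have := norm_add_le (x * y - z) z
    rw [← e, norm_mul] at this
    linarith
  have h2 : B * V - A ≤ S2 := by
    have e : y * t = (y * t - x) + x := by ring
    have := norm_add_le (y * t - x) x
    rw [← e, norm_mul] at this
    linarith
  have hkey : 2 * c.re = S1 ^ 2 + S2 ^ 2 - (B ^ 2 - 1) * (V ^ 2 - 1) - 2 := by
    rw [← hP, Pfun_key]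
  exact aux_false C A B V S1 S2 c.re hC6 hcre hA hB hV hS1nn hS2nn h1 h1' h2 hkey
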